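/- Let G ⊆ ℝ^m and s ∈ ℝ^m. If s has two distinct conic representations by elements of G, then the set of elements of G appearing in some conic representation of s is linearly dependent. Conversely, if the elements of G appearing in representations of s are linearly dependent, and each such element appears in some representation with positive coefficient, then s has at least two distinct conic representations. -/

import Mathlib

/-- A conic representation of s by elements of G, encoded as a finitely supported
function with support in G and positive coefficients on the support. -/
def IsConicRepr (m : ℕ) (G : Set (Fin m → ℝ)) (s : Fin m → ℝ)
    (r : (Fin m → ℝ) →₀ ℝ) : Prop :=
  (↑r.support ⊆ G) ∧ (∀ g ∈ r.support, 0 < r g) ∧ r.sum (fun g c => c • g) = s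

/-- The set of elements of G appearing (with positive coefficient) in some conic
representation of s. -/
def ConicAtoms (m : ℕ) (G : Set (Fin m → ℝ)) (s : Fin m → ℝ) : Set (Fin m → ℝ) :=
  {g | ∃ r : (Fin m → ℝ) →₀ ℝ, IsConicRepr m G s r ∧ g ∈ r.support}

lemma repr_sum_eq_lc (m : ℕ) (r : (Fin m → ℝ) →₀ ℝ) :
    r.sum (fun g c => c • g) = Finsupp.linearCombination ℝ id r := by
  rw [Finsupp.linearCombination_apply]; rfl

lemma IsConicRepr.nonneg {m : ℕ} {G : Set (Fin m → ℝ)} {s : Fin m → ℝ}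
    {r : (Fin m → ℝ) →₀ ℝ} (h : IsConicRepr m G s r) (x : Fin m → ℝ) : 0 ≤ r x := by
  by_cases hx : x ∈ r.support
  · exact (h.2.1 x hx).le
  · simp [Finsupp.notMem_support_iff.1 hx]

/-- s has two distinct conic representations by elements of G iff the set of elements
of G appearing in some conic representation of s is linearly dependent. -/
theorem indeterminate_iff_atoms_linearDependent (m : ℕ) (G : Set (Fin m → ℝ))
    (s : Fin m → ℝ) :
    ((∃ r₁ r₂ : (Fin m → ℝ) →₀ ℝ,
        IsConicRepr m G s r₁ ∧ IsConicRepr m G s r₂ ∧ r₁ ≠ r₂) →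
      ¬ LinearIndependent ℝ (fun g : ConicAtoms m G s => (g : Fin m → ℝ))) ∧
    ((¬ LinearIndependent ℝ (fun g : ConicAtoms m G s => (g : Fin m → ℝ))) →
      ∃ r₁ r₂ : (Fin m → ℝ) →₀ ℝ,
        IsConicRepr m G s r₁ ∧ IsConicRepr m G s r₂ ∧ r₁ ≠ r₂) := by
  constructor
  · rintro ⟨r₁, r₂, h₁, h₂, hne⟩ hLI
    rw [linearIndependent_subtype_iff, linearIndepOn_iff] at hLI
    have hl : (r₁ - r₂) = 0 := by
      apply hLI
      · rw [Finsupp.mem_supported]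
        intro g hg
        rcases Finset.mem_union.1 (Finsupp.support_sub hg) with h | h
        · exact ⟨r₁, h₁, h⟩
        · exact ⟨r₂, h₂, h⟩
      · rw [map_sub, ← repr_sum_eq_lc, ← repr_sum_eq_lc, h₁.2.2, h₂.2.2, sub_self]
    exact hne (sub_eq_zero.1 hl)
  · intro hdep
    rw [linearIndependent_subtype_iff, linearIndepOn_iff] at hdep
    push_neg at hdep
    obtain ⟨l, hlsupp, hl0, hlne⟩ := hdep
    rw [Finsupp.mem_supported] at hlsupp
    -- choose a representation for each atom
    have hrep : ∀ g : Fin m → ℝ, ∃ r : (Fin m → ℝ) →₀ ℝ,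
        g ∈ ConicAtoms m G s → IsConicRepr m G s r ∧ g ∈ r.support := by
      intro g
      by_cases h : g ∈ ConicAtoms m G s
      · obtain ⟨r, hr⟩ := h; exact ⟨r, fun _ => hr⟩
      · exact ⟨0, fun h' => absurd h' h⟩
    choose rep hrep using hrep
    have hrep' : ∀ g ∈ l.support, IsConicRepr m G s (rep g) ∧ g ∈ (rep g).support :=
      fun g hg => hrep g (hlsupp hg)
    set T := l.support with hT
    have hTne : T.Nonempty := Finsupp.support_nonempty_iff.2 hlne
    set k : ℝ := (T.card : ℝ) with hk
    have hkpos : 0 < k := by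
      rw [hk]; exact_mod_cast Finset.card_pos.2 hTne
    set R : (Fin m → ℝ) →₀ ℝ := k⁻¹ • ∑ g ∈ T, rep g with hR
    have hRapply : ∀ x, R x = k⁻¹ * ∑ g ∈ T, rep g x := by
      intro x
      simp [hR, Finsupp.finset_sum_apply]
    have hRnonneg : ∀ x, 0 ≤ R x := by
      intro x
      rw [hRapply]
      exact mul_nonneg (inv_nonneg.2 hkpos.le)
        (Finset.sum_nonneg fun g hg => ((hrep' g hg).1).nonneg x)
    have hRposT : ∀ g ∈ T, 0 < R g := by
      intro g hg
      rw [hRapply]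
      refine mul_pos (inv_pos.2 hkpos) ?_
      refine lt_of_lt_of_le ((hrep' g hg).1.2.1 g (hrep' g hg).2) ?_
      exact Finset.single_le_sum (fun g' hg' => ((hrep' g' hg').1).nonneg g) hg
    have hRsuppG : ↑R.support ⊆ G := by
      intro x hx
      have hx' : R x ≠ 0 := Finsupp.mem_support_iff.1 hx
      rw [hRapply] at hx'
      have : ∑ g ∈ T, rep g x ≠ 0 := fun h => hx' (by rw [h, mul_zero])
      obtain ⟨g, hg, hgx⟩ := Finset.exists_ne_zero_of_sum_ne_zero this
      exact (hrep' g hg).1.1 (Finsupp.mem_support_iff.2 hgx)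
    have hRsum : Finsupp.linearCombination ℝ (id : (Fin m → ℝ) → _) R = s := by
      rw [hR, map_smul, map_sum]
      have : ∀ g ∈ T, Finsupp.linearCombination ℝ (id : (Fin m → ℝ) → _) (rep g) = s := by
        intro g hg
        rw [← repr_sum_eq_lc]
        exact (hrep' g hg).1.2.2
      rw [Finset.sum_congr rfl this, Finset.sum_const, ← Nat.cast_smul_eq_nsmul ℝ, smul_smul]
      show (k⁻¹ * k) • s = s
      rw [inv_mul_cancel₀ hkpos.ne', one_smul]
    have hRrepr : IsConicRepr m G s R :=
      ⟨hRsuppG, fun g hg => hRnonneg g |>.lt_of_ne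
        (Ne.symm (Finsupp.mem_support_iff.1 hg)), by rw [repr_sum_eq_lc]; exact hRsum⟩
    -- choose the perturbation size
    set δ : ℝ := T.inf' hTne (fun g => R g / (|l g| + 1)) with hδ
    have hδpos : 0 < δ := by
      rw [hδ, Finset.lt_inf'_iff]
      intro g hg
      exact div_pos (hRposT g hg) (by positivity)
    set ε : ℝ := δ / 2 with hε
    have hεpos : 0 < ε := by positivity
    have hεsmall : ∀ g ∈ T, ε * |l g| < R g := by
      intro g hg
      have h1 : δ ≤ R g / (|l g| + 1) := Finset.inf'_le _ hg
      have h2 : δ * (|l g| + 1) ≤ R g := by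
        rw [← le_div_iff₀ (by positivity)]; exact h1
      calc ε * |l g| = δ / 2 * |l g| := rfl
        _ < δ * (|l g| + 1) := by nlinarith [abs_nonneg (l g)]
        _ ≤ R g := h2
    set R' : (Fin m → ℝ) →₀ ℝ := R + ε • l with hR'
    have hR'apply : ∀ x, R' x = R x + ε * l x := by intro x; simp [hR']
    have hlR : ∀ x, x ∉ R.support → l x = 0 := by
      intro x hx
      by_contra h
      exact hx (Finsupp.mem_support_iff.2 (hRposT x (Finsupp.mem_support_iff.2 h)).ne')
    have hsupp' : R'.support ⊆ R.support := by
      intro x hx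
      by_contra h
      have : R' x = 0 := by
        rw [hR'apply, Finsupp.notMem_support_iff.1 h, hlR x h, mul_zero, add_zero]
      exact Finsupp.mem_support_iff.1 hx this
    have hR'pos : ∀ x ∈ R'.support, 0 < R' x := by
      intro x hx
      rw [hR'apply]
      by_cases hxT : x ∈ T
      · have h1 : ε * |l x| < R x := hεsmall x hxT
        have h2 : -(ε * |l x|) ≤ ε * l x := by
          rw [neg_le]
          calc -(ε * l x) = ε * (-(l x)) := by ring
            _ ≤ ε * |l x| := by
              exact mul_le_mul_of_nonneg_left (neg_le_abs _) hεpos.le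
        linarith
      · rw [Finsupp.notMem_support_iff.1 hxT, mul_zero, add_zero]
        exact (hRnonneg x).lt_of_ne
          (Ne.symm (Finsupp.mem_support_iff.1 (hsupp' hx)))
    have hR'repr : IsConicRepr m G s R' := by
      refine ⟨?_, hR'pos, ?_⟩
      · exact fun x hx => hRsuppG (hsupp' hx)
      · rw [repr_sum_eq_lc, hR', map_add, hRsum, map_smul, hl0, smul_zero, add_zero]
    refine ⟨R, R', hRrepr, hR'repr, ?_⟩
    obtain ⟨g, hg⟩ := hTne
    intro h
    have : R g = R' g := by rw [h]
    rw [hR'apply] at this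
    have hlg : l g ≠ 0 := Finsupp.mem_support_iff.1 hg
    have : ε * l g = 0 := by linarith
    exact hlg (by simpa [hεpos.ne'] using this)
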